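/- arXiv:1805.08768 — 2 statements merged into one kernel-verified Lean document; each statement's English description precedes it below -/
import Mathlib

section
/- Let p ∈ (0,1) and b ∈ ℕ, and let D be geometric with P(D = d) = (1−p)^{d−1}p for d ≥ 1. The Golomb code with parameter M = 2^b encodes d using ⌊(d−1)/2^b⌋ + 1 + b bits. Then the expected codeword length equals b + 1/(1 − (1−p)^{2^b}). -/
lemma golomb_nat_geom {x : ℝ} (hx0 : 0 ≤ x) (hx1 : x < 1) :
    Summable (fun k : ℕ => (k : ℝ) * x ^ k) := by
  have hn : ‖x‖ < 1 := by rwa [Real.norm_eq_abs, abs_of_nonneg hx0]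
  have := summable_pow_mul_geometric_of_norm_lt_one (R := ℝ) 1 hn
  simpa using this

lemma golomb_aux (x : ℝ) (hx0 : 0 ≤ x) (hx1 : x < 1) (c : ℝ) :
    ∑' k : ℕ, x ^ k * ((k : ℝ) + c) * (1 - x) = c + x / (1 - x) := by
  have h1 : (1 - x) ≠ 0 := by nlinarith
  have hn : ‖x‖ < 1 := by rwa [Real.norm_eq_abs, abs_of_nonneg hx0]
  have hs1 : Summable (fun k : ℕ => (k : ℝ) * x ^ k) := golomb_nat_geom hx0 hx1
  have hs2 : Summable (fun k : ℕ => x ^ k) := summable_geometric_of_lt_one hx0 hx1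
  have key : (fun k : ℕ => x ^ k * ((k : ℝ) + c) * (1 - x)) =
      fun k : ℕ => ((k : ℝ) * x ^ k) * (1 - x) + x ^ k * (c * (1 - x)) := by
    funext k; ring
  rw [key, Summable.tsum_add (hs1.mul_right _) (hs2.mul_right _), tsum_mul_right, tsum_mul_right,
    tsum_coe_mul_geometric_of_norm_lt_one hn, tsum_geometric_of_lt_one hx0 hx1]
  field_simp
  ring

/-- Expected Golomb codeword length for geometric gaps.  The gap `D = d + 1`
(with `d : ℕ`) has probability `(1-p)^d * p`, and the codeword for gap `D`
uses `⌊(D-1)/2^b⌋ + 1 + b` bits. -/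
theorem expected_golomb_length
    (p : ℝ) (hp : p ∈ Set.Ioo (0 : ℝ) 1) (b : ℕ) :
    ∑' d : ℕ, (1 - p) ^ d * p * (((d / 2 ^ b : ℕ) : ℝ) + 1 + b) =
      b + 1 / (1 - (1 - p) ^ (2 ^ b)) := by
  obtain ⟨hp0, hp1⟩ := hp
  set q : ℝ := 1 - p with hqdef
  have hq0 : 0 ≤ q := by simp [hqdef]; linarith
  have hq1 : q < 1 := by simp [hqdef]; linarith
  set M : ℕ := 2 ^ b with hMdef
  have hMpos : 0 < M := pow_pos (by norm_num) b
  haveI : NeZero M := ⟨hMpos.ne'⟩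
  set x : ℝ := q ^ M with hxdef
  have hx0 : 0 ≤ x := pow_nonneg hq0 M
  have hx1 : x < 1 := pow_lt_one₀ hq0 hq1 hMpos.ne'
  set f : ℕ → ℝ := fun d => q ^ d * p * (((d / M : ℕ) : ℝ) + 1 + b) with hfdef
  -- summability of f
  have hsg : Summable (fun d : ℕ => ((d : ℝ) * q ^ d + (1 + b) * q ^ d) * p) :=
    ((golomb_nat_geom hq0 hq1).add
      ((summable_geometric_of_lt_one hq0 hq1).mul_left _)).mul_right p
  have hsf : Summable f := by
    apply hsg.of_nonneg_of_le
    · intro d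
      apply mul_nonneg (mul_nonneg (pow_nonneg hq0 d) hp0.le)
      positivity
    · intro d
      have hle : ((d / M : ℕ) : ℝ) ≤ (d : ℝ) := by
        exact_mod_cast Nat.div_le_self d M
      have h1 : f d = q ^ d * (((d / M : ℕ) : ℝ) + 1 + b) * p := by rw [hfdef]; ring
      have h2 : ((d : ℝ) * q ^ d + (1 + b) * q ^ d) * p = q ^ d * ((d : ℝ) + 1 + b) * p := by
        ring
      rw [h1, h2]
      gcongr
  -- reindex via div/mod
  have hinner : ∀ k : ℕ, ∀ r : Fin M,
      f ((Nat.divModEquiv M).symm (k, r)) =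
        (x ^ k * ((k : ℝ) + (1 + b))) * (q ^ (r : ℕ) * p) := by
    intro k r
    have hdiv : (k * M + (r : ℕ)) / M = k := by
      rw [mul_comm, Nat.mul_add_div hMpos, Nat.div_eq_of_lt r.is_lt, add_zero]
    simp only [hfdef, Nat.divModEquiv, Equiv.coe_fn_symm_mk, hdiv]
    rw [pow_add, pow_mul]
    ring
  have hsf' : Summable (fun kr : ℕ × Fin M => f ((Nat.divModEquiv M).symm kr)) :=
    (Nat.divModEquiv M).symm.summable_iff.mpr hsf
  calc ∑' d : ℕ, f d
      = ∑' k : ℕ, ∑' r : Fin M, f ((Nat.divModEquiv M).symm (k, r)) := by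
        rw [← (Nat.divModEquiv M).symm.tsum_eq f, Summable.tsum_prod' hsf' (fun _ => Summable.of_finite)]
    _ = ∑' k : ℕ, x ^ k * ((k : ℝ) + (1 + b)) * (1 - x) := by
        congr 1; funext k
        rw [tsum_fintype]
        have hsum : ∑ r : Fin M, (q ^ (r : ℕ) * p) = 1 - x := by
          rw [← Finset.sum_mul, Fin.sum_univ_eq_sum_range, geom_sum_eq hq1.ne]
          have hp' : p = 1 - q := by simp [hqdef]
          rw [hp', hxdef]
          field_simp [sub_ne_zero.mpr hq1.ne]
          ring
        simp only [hinner]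
        rw [← Finset.mul_sum, hsum]
    _ = (1 + b) + x / (1 - x) := golomb_aux x hx0 hx1 (1 + b)
    _ = b + 1 / (1 - x) := by
        have h1 : (1 - x) ≠ 0 := by nlinarith
        field_simp
        ring
end

section
/- Golomb position encoding followed by decoding is the identity: for any strictly increasing sequence of positive integers 0 < i₁ < i₂ < … < i_k and any b ≥ 0, encoding the gaps d_j = i_j − i_{j−1} (with i₀ = 0) via q_j = (d_j − 1) div 2^b ones, a zero, and the b-bit binary representation of r_j = (d_j − 1) mod 2^b, and then decoding by the recursion i_j = i_{j−1} + q_j·2^b + r_j + 1, recovers the original sequence i₁,…,i_k. -/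
/-- Golomb position encoding followed by decoding recovers the original strictly
increasing sequence of positive non-zero positions. -/
theorem golomb_roundtrip
    (k b : ℕ) (i : ℕ → ℕ)
    (hi0 : i 0 = 0)
    (hmono : ∀ j, j < k → i j < i (j + 1))
    (d q r decoded : ℕ → ℕ)
    (hd : ∀ j, 1 ≤ j → j ≤ k → d j = i j - i (j - 1))
    (hq : ∀ j, 1 ≤ j → j ≤ k → q j = (d j - 1) / 2 ^ b)
    (hr : ∀ j, 1 ≤ j → j ≤ k → r j = (d j - 1) % 2 ^ b)
    (hdec0 : decoded 0 = 0)
    (hdec : ∀ j, 1 ≤ j → j ≤ k →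
      decoded j = decoded (j - 1) + q j * 2 ^ b + r j + 1) :
    ∀ j, j ≤ k → decoded j = i j := by
  intro j
  induction j with
  | zero => intro _; rw [hdec0, hi0]
  | succ n ih =>
    intro hle
    have h1 : 1 ≤ n + 1 := Nat.succ_le_succ (Nat.zero_le n)
    have hstep : i n < i (n + 1) := hmono n (Nat.lt_of_succ_le hle)
    have hdpos : 1 ≤ d (n + 1) := by
      rw [hd (n + 1) h1 hle]; simp only [Nat.add_sub_cancel]; omega
    have := hdec (n + 1) h1 hle
    rw [hq (n + 1) h1 hle, hr (n + 1) h1 hle] at this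
    simp only [Nat.add_sub_cancel] at this
    have hdm : (d (n+1)-1)/2^b * 2^b + (d (n+1)-1)%2^b = d (n+1) - 1 :=
      Nat.div_add_mod' _ _
    rw [this, ih (Nat.le_of_succ_le hle)]
    have hdval := hd (n + 1) h1 hle
    simp only [Nat.add_sub_cancel] at hdval
    omega
end
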